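/- Suppose Condition (2) holds: ∑_{i=1}^∞ w̃_i = ∞ and ∑_{i=1}^∞ w̃_i² < ∞, and the ratings are subjected to a (k, m̃, 𝓘)-misbehavior with k < ∞ and last injected index i_k. Then for every ε ∈ (0,1], every m ∈ 𝓜, and every i > i_k, P[ |β_{i,m} − α_m| > ε ] ≤ 2·exp( −φ̃_i·ε² ), where φ̃_i = 1{ ϕ_{i−1}/(ε·ϕ_{i_k−1}) ≤ 1 }·( 1 − ϕ_{i−1}/(ε·ϕ_{i_k−1}) )² / ( (ϕ_{i−1}²/2)·∑_{j=i_k+1}^i w̃_j²/ϕ_{j−1}² ). -/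

import Mathlib

open MeasureTheory Filter

/-- Cumulative weight `∑_{j=1}^i w_j`. -/
noncomputable def Sw (w : ℕ → ℝ) (i : ℕ) : ℝ := ∑ j ∈ Finset.Icc 1 i, w j

/-- Normalized weight `w̃_i = w_i / ∑_{j=1}^i w_j`. -/
noncomputable def wnorm (w : ℕ → ℝ) (i : ℕ) : ℝ := w i / Sw w i

/-- Historical collective opinion
`β_{i,m} = (∑_{j=1}^i w_j 1{R_j = m}) / (∑_{j=1}^i w_j)`. -/
noncomputable def betaH {Ω : Type*} (w : ℕ → ℝ) (R : ℕ → Ω → ℕ) (i m : ℕ) (ω : Ω) : ℝ :=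
  (∑ j ∈ Finset.Icc 1 i, w j * (if R j ω = m then (1 : ℝ) else 0)) / Sw w i

/-- `𝓗_i`: the σ-algebra generated by `R_1, …, R_i` (trivial for `i = 0`). -/
def Hsig {Ω : Type*} (R : ℕ → Ω → ℕ) (i : ℕ) : MeasurableSpace Ω :=
  ⨆ j ∈ Finset.Icc 1 i, MeasurableSpace.comap (R j) ⊤

/-- `ϕ_j = ∏_{ℓ=1}^j [1 − w̃_{ℓ+1} (1 − γ_ℓ + η_ℓ γ_ℓ)]` (with `ϕ_0 = 1`),
where `wt` is the sequence of normalized weights. -/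
noncomputable def varphi (wt γ η : ℕ → ℝ) (j : ℕ) : ℝ :=
  ∏ ℓ ∈ Finset.Icc 1 j, (1 - wt (ℓ + 1) * (1 - γ ℓ + η ℓ * γ ℓ))

/-- Misbehavior-adjusted convergence-speed metric (for last injected index `ik ≥ 1`):
`φ̃_i = 1{ϕ_{i−1}/(ε ϕ_{ik−1}) ≤ 1} (1 − ϕ_{i−1}/(ε ϕ_{ik−1}))²
        / ((ϕ_{i−1}²/2) ∑_{j=ik+1}^i w̃_j²/ϕ_{j−1}²)`. -/
noncomputable def phiTilde (wt γ η : ℕ → ℝ) (ik : ℕ) (ε : ℝ) (i : ℕ) : ℝ :=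
  (if varphi wt γ η (i - 1) / (ε * varphi wt γ η (ik - 1)) ≤ 1 then
      (1 - varphi wt γ η (i - 1) / (ε * varphi wt γ η (ik - 1))) ^ 2
    else 0) /
    ((varphi wt γ η (i - 1)) ^ 2 / 2 *
      ∑ j ∈ Finset.Icc (ik + 1) i, (wt j) ^ 2 / (varphi wt γ η (j - 1)) ^ 2)

open intervalIntegral in
lemma hoeffding_aux (p : ℝ) (hp0 : 0 ≤ p) (hp1 : p ≤ 1) (l : ℝ) :
    (1 - p + p * Real.exp l) * Real.exp (-(l * p)) ≤ Real.exp (l ^ 2 / 8) := by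
  have hden : ∀ x : ℝ, 0 < 1 - p + p * Real.exp x := by
    intro x
    rcases lt_or_ge p 1 with h | h
    · have : 0 ≤ p * Real.exp x := mul_nonneg hp0 (Real.exp_pos x).le
      linarith
    · have hp : p = 1 := le_antisymm hp1 h
      simpa [hp] using Real.exp_pos x
  set g : ℝ → ℝ := fun x => p * Real.exp x / (1 - p + p * Real.exp x) - p with hgdef
  have hdend : ∀ x : ℝ, HasDerivAt (fun y => 1 - p + p * Real.exp y) (p * Real.exp x) x := by
    intro x
    simpa using ((Real.hasDerivAt_exp x).const_mul p).const_add (1 - p)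
  have hgd : ∀ x : ℝ, HasDerivAt g
      (p * Real.exp x * (1 - p) / (1 - p + p * Real.exp x) ^ 2) x := by
    intro x
    have h1 : HasDerivAt (fun y => p * Real.exp y / (1 - p + p * Real.exp y))
        ((p * Real.exp x * (1 - p + p * Real.exp x) - p * Real.exp x * (p * Real.exp x)) /
          (1 - p + p * Real.exp x) ^ 2) x :=
      ((Real.hasDerivAt_exp x).const_mul p).div (hdend x) (ne_of_gt (hden x))
    have h2 := h1.sub_const p
    refine h2.congr_deriv ?_
    ring
  have hg'le : ∀ x : ℝ, p * Real.exp x * (1 - p) / (1 - p + p * Real.exp x) ^ 2 ≤ 1 / 4 := by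
    intro x
    rw [div_le_iff₀ (pow_pos (hden x) 2)]
    nlinarith [sq_nonneg (1 - p - p * Real.exp x), Real.exp_pos x]
  have hg'0 : ∀ x : ℝ, 0 ≤ p * Real.exp x * (1 - p) / (1 - p + p * Real.exp x) ^ 2 := by
    intro x
    have h1 := Real.exp_pos x
    have h2 := pow_pos (hden x) 2
    have : 0 ≤ p * Real.exp x * (1 - p) :=
      mul_nonneg (mul_nonneg hp0 h1.le) (by linarith)
    exact div_nonneg this h2.le
  have hg'cont : Continuous fun x => p * Real.exp x * (1 - p) / (1 - p + p * Real.exp x) ^ 2 := by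
    apply Continuous.div (by continuity) (by continuity)
    intro x; exact pow_ne_zero 2 (ne_of_gt (hden x))
  have hgcont : Continuous g := by
    apply Continuous.sub _ continuous_const
    apply Continuous.div (by continuity) (by continuity)
    intro x; exact ne_of_gt (hden x)
  have hg0 : g 0 = 0 := by simp [hgdef]
  -- bound on g
  have hgub : ∀ x : ℝ, 0 ≤ x → g x ≤ x / 4 := by
    intro x hx
    have hint : ∫ t in (0:ℝ)..x, (p * Real.exp t * (1 - p) / (1 - p + p * Real.exp t) ^ 2)
        = g x - g 0 :=
      integral_eq_sub_of_hasDerivAt (fun t _ => hgd t) (hg'cont.intervalIntegrable 0 x)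
    have hmono : ∫ t in (0:ℝ)..x, (p * Real.exp t * (1 - p) / (1 - p + p * Real.exp t) ^ 2)
        ≤ ∫ _t in (0:ℝ)..x, (1/4 : ℝ) := by
      apply integral_mono_on hx (hg'cont.intervalIntegrable 0 x)
        (intervalIntegrable_const) (fun t _ => hg'le t)
    rw [hint, hg0] at hmono
    simp only [intervalIntegral.integral_const, smul_eq_mul] at hmono
    linarith
  have hglb : ∀ x : ℝ, x ≤ 0 → x / 4 ≤ g x := by
    intro x hx
    have hint : ∫ t in x..(0:ℝ), (p * Real.exp t * (1 - p) / (1 - p + p * Real.exp t) ^ 2)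
        = g 0 - g x :=
      integral_eq_sub_of_hasDerivAt (fun t _ => hgd t) (hg'cont.intervalIntegrable x 0)
    have hmono : ∫ t in x..(0:ℝ), (p * Real.exp t * (1 - p) / (1 - p + p * Real.exp t) ^ 2)
        ≤ ∫ _t in x..(0:ℝ), (1/4 : ℝ) := by
      apply integral_mono_on hx (hg'cont.intervalIntegrable x 0)
        (intervalIntegrable_const) (fun t _ => hg'le t)
    rw [hint, hg0] at hmono
    simp only [intervalIntegral.integral_const, smul_eq_mul] at hmono
    linarith
  -- the function f
  set f : ℝ → ℝ := fun x => Real.log (1 - p + p * Real.exp x) - p * x with hfdef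
  have hfd : ∀ x : ℝ, HasDerivAt f (g x) x := by
    intro x
    have h1 : HasDerivAt (fun y => Real.log (1 - p + p * Real.exp y))
        (p * Real.exp x / (1 - p + p * Real.exp x)) x :=
      (hdend x).log (ne_of_gt (hden x))
    have h3 := h1.sub ((hasDerivAt_id x).const_mul p)
    rw [mul_one] at h3
    exact h3
  have hf0 : f 0 = 0 := by simp [hfdef]
  have hfle : f l ≤ l ^ 2 / 8 := by
    rcases le_or_gt 0 l with hl | hl
    · have hint : ∫ t in (0:ℝ)..l, g t = f l - f 0 :=
        integral_eq_sub_of_hasDerivAt (fun t _ => hfd t) (hgcont.intervalIntegrable 0 l)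
      have hmono : ∫ t in (0:ℝ)..l, g t ≤ ∫ t in (0:ℝ)..l, t / 4 :=
        integral_mono_on hl (hgcont.intervalIntegrable 0 l)
          ((continuous_id.div_const 4).intervalIntegrable 0 l)
          (fun t ht => hgub t ht.1)
      have hval : ∫ t in (0:ℝ)..l, t / 4 = l ^ 2 / 8 := by
        rw [intervalIntegral.integral_div, integral_id]; ring
      rw [hint, hf0, hval] at hmono; linarith
    · have hint : ∫ t in l..(0:ℝ), g t = f 0 - f l :=
        integral_eq_sub_of_hasDerivAt (fun t _ => hfd t) (hgcont.intervalIntegrable l 0)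
      have hmono : ∫ t in l..(0:ℝ), t / 4 ≤ ∫ t in l..(0:ℝ), g t :=
        integral_mono_on hl.le ((continuous_id.div_const 4).intervalIntegrable l 0)
          (hgcont.intervalIntegrable l 0)
          (fun t ht => hglb t ht.2)
      have hval : ∫ t in l..(0:ℝ), t / 4 = -(l ^ 2 / 8) := by
        rw [intervalIntegral.integral_div, integral_id]; ring
      rw [hint, hf0, hval] at hmono; linarith
  -- conclude
  have : (1 - p + p * Real.exp l) * Real.exp (-(l * p)) = Real.exp (f l) := by
    rw [hfdef]
    simp only
    rw [Real.exp_sub, Real.exp_log (hden l)]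
    rw [div_eq_mul_inv, ← Real.exp_neg]
    ring_nf
  rw [this]
  exact Real.exp_le_exp.mpr hfle

lemma integrable_of_bdd {Ω : Type*} [MeasurableSpace Ω] {μ : Measure Ω} [IsFiniteMeasure μ]
    {h : Ω → ℝ} (hm : Measurable h) {C : ℝ} (hC : ∀ ω, |h ω| ≤ C) : Integrable h μ :=
  ⟨hm.aestronglyMeasurable, HasFiniteIntegral.of_bounded (C := C) (Filter.Eventually.of_forall hC)⟩


lemma step_mgf {Ω : Type*} {m' : MeasurableSpace Ω} [inst : MeasurableSpace Ω]
    (μ : Measure Ω) [IsProbabilityMeasure μ] (hm' : m' ≤ inst)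
    (f X c : Ω → ℝ) (B : ℝ)
    (hfm : Measurable[m'] f) (hf0 : ∀ ω, 0 ≤ f ω) (hfB : ∀ ω, f ω ≤ B)
    (hX : ∀ ω, X ω = 0 ∨ X ω = 1) (hXm : Measurable X)
    (hcm : Measurable[m'] c) (hc0 : ∀ ω, 0 ≤ c ω) (hc1 : ∀ ω, c ω ≤ 1)
    (hcond : μ[X | m'] =ᵐ[μ] c) (l : ℝ) :
    ∫ ω, f ω * Real.exp (l * (X ω - c ω)) ∂μ
      ≤ (∫ ω, f ω ∂μ) * Real.exp (l ^ 2 / 8) := by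
  have hB0 : 0 ≤ B := le_trans (hf0 (Classical.choice (by
    have : μ Set.univ = 1 := measure_univ
    by_contra hne
    rw [not_nonempty_iff] at hne
    simp [Set.univ_eq_empty_iff.mpr hne] at this))) (hfB _)
  -- ambient measurability
  have hfm0 : Measurable f := hfm.mono hm' le_rfl
  have hcm0 : Measurable c := hcm.mono hm' le_rfl
  set g : Ω → ℝ := fun ω => f ω * Real.exp (-l * c ω) with hgdef
  have hgm : Measurable[m'] g :=
    hfm.mul (Real.measurable_exp.comp (hcm.const_mul (-l)))
  have hgm0 : Measurable g := hgm.mono hm' le_rfl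
  have hg0 : ∀ ω, 0 ≤ g ω := fun ω => mul_nonneg (hf0 ω) (Real.exp_pos _).le
  have hgB : ∀ ω, g ω ≤ B * Real.exp |l| := by
    intro ω
    have h1 : -l * c ω ≤ |l| := by
      have : |(-l) * c ω| ≤ |l| * 1 := by
        rw [abs_mul, abs_neg]
        exact mul_le_mul_of_nonneg_left (abs_le.mpr ⟨by linarith [hc0 ω, hc1 ω], hc1 ω⟩) (abs_nonneg l)
      calc -l * c ω ≤ |(-l) * c ω| := le_abs_self _
        _ ≤ |l| := by linarith
    exact mul_le_mul (hfB ω) (Real.exp_le_exp.mpr h1) (Real.exp_pos _).le hB0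
  have hgabs : ∀ ω, |g ω| ≤ B * Real.exp |l| := fun ω => by
    rw [abs_of_nonneg (hg0 ω)]; exact hgB ω
  have hXb : ∀ ω, |X ω| ≤ 1 := fun ω => by rcases hX ω with h | h <;> simp [h]
  have hgint : Integrable g μ := integrable_of_bdd hgm0 hgabs
  have hgXint : Integrable (fun ω => g ω * X ω) μ := by
    apply integrable_of_bdd (hgm0.mul hXm)
    intro ω
    calc |g ω * X ω| = |g ω| * |X ω| := abs_mul _ _
      _ ≤ (B * Real.exp |l|) * 1 := mul_le_mul (hgabs ω) (hXb ω) (abs_nonneg _)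
          (by positivity)
      _ = B * Real.exp |l| := mul_one _
  have hgcint : Integrable (fun ω => g ω * c ω) μ := by
    apply integrable_of_bdd (hgm0.mul hcm0)
    intro ω
    calc |g ω * c ω| = |g ω| * |c ω| := abs_mul _ _
      _ ≤ (B * Real.exp |l|) * 1 := mul_le_mul (hgabs ω)
          (abs_le.mpr ⟨by linarith [hc0 ω, hc1 ω], hc1 ω⟩) (abs_nonneg _) (by positivity)
      _ = B * Real.exp |l| := mul_one _
  have hXint : Integrable X μ := integrable_of_bdd hXm hXb
  -- key: ∫ g X = ∫ g c
  have hkey : ∫ ω, g ω * X ω ∂μ = ∫ ω, g ω * c ω ∂μ := by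
    have hpull : μ[g * X | m'] =ᵐ[μ] g * μ[X | m'] :=
      condExp_stronglyMeasurable_mul_of_bound hm' (hgm.stronglyMeasurable) hXint
        (B * Real.exp |l|) (Filter.Eventually.of_forall (fun ω => by
          rw [Real.norm_eq_abs]; exact hgabs ω))
    have h1 : ∫ ω, g ω * X ω ∂μ = ∫ ω, (μ[g * X | m']) ω ∂μ :=
      (integral_condExp hm').symm
    have h2 : ∫ ω, (μ[g * X | m']) ω ∂μ = ∫ ω, g ω * c ω ∂μ := by
      apply integral_congr_ae
      filter_upwards [hpull, hcond] with ω h1 h2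
      simp only [Pi.mul_apply] at h1
      rw [h1, h2]
    rw [h1, h2]
  -- pointwise identity
  have hpt : ∀ ω, f ω * Real.exp (l * (X ω - c ω)) = g ω + (Real.exp l - 1) * (g ω * X ω) := by
    intro ω
    rcases hX ω with h | h
    · simp only [h, mul_zero, add_zero, hgdef]
      rw [show l * (0 - c ω) = -l * c ω by ring]
    · simp only [h, mul_one, hgdef]
      rw [show l * (1 - c ω) = l + (-l * c ω) by ring, Real.exp_add]
      ring
  have hLHS : ∫ ω, f ω * Real.exp (l * (X ω - c ω)) ∂μ
      = ∫ ω, g ω * (1 - c ω + c ω * Real.exp l) ∂μ := by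
    have h1 : ∫ ω, f ω * Real.exp (l * (X ω - c ω)) ∂μ
        = ∫ ω, (g ω + (Real.exp l - 1) * (g ω * X ω)) ∂μ :=
      integral_congr_ae (Filter.Eventually.of_forall (fun ω => hpt ω))
    rw [h1, integral_add hgint ((hgXint.const_mul _))]
    rw [integral_const_mul, hkey]
    rw [show (fun ω => g ω * (1 - c ω + c ω * Real.exp l))
        = fun ω => g ω + (Real.exp l - 1) * (g ω * c ω) by funext ω; ring]
    rw [integral_add hgint (hgcint.const_mul _), integral_const_mul]
  rw [hLHS]
  have hptb : ∀ ω, g ω * (1 - c ω + c ω * Real.exp l) ≤ f ω * Real.exp (l ^ 2 / 8) := by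
    intro ω
    have h1 : g ω * (1 - c ω + c ω * Real.exp l)
        = f ω * ((1 - c ω + c ω * Real.exp l) * Real.exp (-(l * c ω))) := by
      rw [hgdef]; simp only; rw [show -l * c ω = -(l * c ω) by ring]; ring
    rw [h1]
    exact mul_le_mul_of_nonneg_left (hoeffding_aux (c ω) (hc0 ω) (hc1 ω) l) (hf0 ω)
  have hint1 : Integrable (fun ω => g ω * (1 - c ω + c ω * Real.exp l)) μ := by
    have : (fun ω => g ω * (1 - c ω + c ω * Real.exp l))
        = fun ω => g ω + (Real.exp l - 1) * (g ω * c ω) := by funext ω; ring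
    rw [this]
    exact hgint.add (hgcint.const_mul _)
  have hfint : Integrable f μ :=
    integrable_of_bdd hfm0 (fun ω => abs_le.mpr ⟨by linarith [hf0 ω], hfB ω⟩)
  have hint2 : Integrable (fun ω => f ω * Real.exp (l ^ 2 / 8)) μ :=
    hfint.mul_const (Real.exp (l ^ 2 / 8))
  calc ∫ ω, g ω * (1 - c ω + c ω * Real.exp l) ∂μ
      ≤ ∫ ω, f ω * Real.exp (l ^ 2 / 8) ∂μ := integral_mono hint1 hint2 hptb
    _ = (∫ ω, f ω ∂μ) * Real.exp (l ^ 2 / 8) := integral_mul_const _ _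

set_option maxHeartbeats 2000000 in
/-- Under Condition (2) and a `(k, m̃, 𝓘)`-misbehavior with last
injected index `i_k`, for every `ε ∈ (0,1]`, `m ∈ 𝓜`, `i > i_k`:
`P[ |β_{i,m} − α_m| > ε ] ≤ 2 exp(−φ̃_i ε²)`. -/
theorem stmt_6
    {Ω : Type*} [MeasurableSpace Ω] (μ : Measure Ω) [IsProbabilityMeasure μ]
    (M : ℕ) (hM : 1 ≤ M)
    (α : ℕ → ℝ) (hα : ∀ m ∈ Finset.Icc 1 M, α m ∈ Set.Icc (0 : ℝ) 1)
    (hα1 : ∑ m ∈ Finset.Icc 1 M, α m = 1)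
    (R : ℕ → Ω → ℕ) (hRrange : ∀ i, 1 ≤ i → ∀ ω, R i ω ∈ Finset.Icc 1 M)
    (hRmeas : ∀ i, Measurable (R i))
    (w : ℕ → ℝ) (hw : ∀ j, 0 ≤ w j) (hw1 : 0 < w 1)
    (γ : ℕ → ℝ) (hγ : ∀ i, γ i ∈ Set.Icc (0 : ℝ) 1)
    (hγsup : ∃ g, g < 1 ∧ ∀ i, γ i ≤ g)
    (η : ℕ → ℝ) (hη : ∀ i, η i ∈ Set.Icc (0 : ℝ) 1)
    -- `(k, m̃, 𝓘)`-misbehavior with `𝓘` finite, `ik = max 𝓘` the last injected index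
    (I : Finset ℕ) (hI1 : ∀ i ∈ I, 1 ≤ i)
    (ik : ℕ) (hik : ik ∈ I) (hikmax : ∀ j ∈ I, j ≤ ik)
    (mtil : ℕ) (hmtil : mtil ∈ Finset.Icc 1 M)
    (hmis : ∀ i ∈ I, ∀ ω, R i ω = mtil)
    -- outside the injected indices, ratings follow the linear herding model
    (hmodel : ∀ i : ℕ, 1 ≤ i → (i + 1) ∉ I → ∀ m ∈ Finset.Icc 1 M,
      μ[(fun ω => if R (i + 1) ω = m then (1 : ℝ) else 0) | Hsig R i]
        =ᵐ[μ] fun ω =>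
          γ i * ((1 - η i) * betaH w R i m ω + η i * α m) + (1 - γ i) * α m)
    -- Condition (2): `∑ w̃_i = ∞` and `∑ w̃_i² < ∞`
    (hdiv : Tendsto (fun n => ∑ i ∈ Finset.Icc 1 n, wnorm w i) atTop atTop)
    (hsq : Summable fun i : ℕ => (wnorm w (i + 1)) ^ 2) :
    ∀ ε : ℝ, 0 < ε → ε ≤ 1 → ∀ m ∈ Finset.Icc 1 M, ∀ i : ℕ, ik < i →
      μ {ω | ε < |betaH w R i m ω - α m|}
        ≤ ENNReal.ofReal (2 * Real.exp (-(phiTilde (wnorm w) γ η ik ε i) * ε ^ 2)) := by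
  intro ε hε hε1 m hm i hi
  obtain ⟨hαm0, hαm1⟩ := hα m hm
  have hik1 : 1 ≤ ik := hI1 ik hik
  have hi1 : 1 ≤ i := le_trans hik1 hi.le
  -- basic weight facts
  have hSwpos : ∀ n, 1 ≤ n → 0 < Sw w n := by
    intro n hn
    have h1 : (1 : ℕ) ∈ Finset.Icc 1 n := Finset.mem_Icc.mpr ⟨le_rfl, hn⟩
    have h2 := Finset.single_le_sum (f := w) (fun j _ => hw j) h1
    unfold Sw; linarith
  have hSwnn : ∀ n, 0 ≤ Sw w n := fun n => Finset.sum_nonneg fun j _ => hw j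
  have hwt0 : ∀ n, 0 ≤ wnorm w n := fun n => div_nonneg (hw n) (hSwnn n)
  have hwtlt : ∀ n, 2 ≤ n → wnorm w n < 1 := by
    intro n hn
    have hsub : ({1, n} : Finset ℕ) ⊆ Finset.Icc 1 n := by
      intro x hx
      rcases Finset.mem_insert.mp hx with h | h
      · subst h; exact Finset.mem_Icc.mpr ⟨le_rfl, by omega⟩
      · rw [Finset.mem_singleton] at h; subst h
        exact Finset.mem_Icc.mpr ⟨by omega, le_rfl⟩
    have hne : (1 : ℕ) ≠ n := by omega
    have hpair : w 1 + w n ≤ Sw w n := by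
      have h3 := Finset.sum_le_sum_of_subset_of_nonneg hsub (fun j _ _ => hw j)
      rwa [Finset.sum_pair hne] at h3
    have h4 : w n < Sw w n := by linarith
    exact (div_lt_one (hSwpos n (by omega))).mpr h4
  have hu01 : ∀ ℓ, 0 ≤ 1 - γ ℓ + η ℓ * γ ℓ ∧ 1 - γ ℓ + η ℓ * γ ℓ ≤ 1 := by
    intro ℓ
    obtain ⟨hγ0, hγ1⟩ := hγ ℓ; obtain ⟨hη0, hη1⟩ := hη ℓ
    constructor <;> nlinarith
  have hfac : ∀ ℓ, 1 ≤ ℓ → 0 < 1 - wnorm w (ℓ + 1) * (1 - γ ℓ + η ℓ * γ ℓ)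
      ∧ 1 - wnorm w (ℓ + 1) * (1 - γ ℓ + η ℓ * γ ℓ) ≤ 1 := by
    intro ℓ hℓ
    obtain ⟨hu0, hu1⟩ := hu01 ℓ
    have h1 : wnorm w (ℓ + 1) * (1 - γ ℓ + η ℓ * γ ℓ) ≤ wnorm w (ℓ + 1) * 1 :=
      mul_le_mul_of_nonneg_left hu1 (hwt0 _)
    have h2 := hwtlt (ℓ + 1) (by omega)
    have h3 : 0 ≤ wnorm w (ℓ + 1) * (1 - γ ℓ + η ℓ * γ ℓ) := mul_nonneg (hwt0 _) hu0
    constructor <;> linarith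
  have hφpos : ∀ n, 0 < varphi (wnorm w) γ η n := by
    intro n
    apply Finset.prod_pos
    intro ℓ hℓ
    exact (hfac ℓ (Finset.mem_Icc.mp hℓ).1).1
  have hφsucc : ∀ k, varphi (wnorm w) γ η (k + 1)
      = varphi (wnorm w) γ η k
        * (1 - wnorm w (k + 2) * (1 - γ (k + 1) + η (k + 1) * γ (k + 1))) := by
    intro k
    unfold varphi
    exact Finset.prod_Icc_succ_top (Nat.le_add_left 1 k) _
  -- indicator
  set ind : ℕ → Ω → ℝ := fun j ω => if R j ω = m then (1 : ℝ) else 0 with hinddef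
  have hind01 : ∀ j ω, ind j ω = 0 ∨ ind j ω = 1 := by
    intro j ω
    by_cases h : R j ω = m <;> simp [hinddef, h]
  have hindb : ∀ j ω, 0 ≤ ind j ω ∧ ind j ω ≤ 1 := by
    intro j ω
    rcases hind01 j ω with h | h <;> rw [h] <;> norm_num
  -- beta facts
  have hβ01 : ∀ n, 1 ≤ n → ∀ ω, 0 ≤ betaH w R n m ω ∧ betaH w R n m ω ≤ 1 := by
    intro n hn ω
    have hnum0 : 0 ≤ ∑ j ∈ Finset.Icc 1 n, w j * (if R j ω = m then (1 : ℝ) else 0) :=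
      Finset.sum_nonneg fun j _ => mul_nonneg (hw j) (by positivity)
    have hnum1 : (∑ j ∈ Finset.Icc 1 n, w j * (if R j ω = m then (1 : ℝ) else 0)) ≤ Sw w n := by
      apply Finset.sum_le_sum
      intro j _
      have := (hindb j ω).2
      have h0 := hw j
      calc w j * (if R j ω = m then (1 : ℝ) else 0) = w j * ind j ω := rfl
        _ ≤ w j * 1 := mul_le_mul_of_nonneg_left this h0
        _ = w j := mul_one _
    constructor
    · exact div_nonneg hnum0 (hSwnn n)
    · exact (div_le_one (hSwpos n hn)).mpr hnum1
  have hβrec : ∀ n, 1 ≤ n → ∀ ω, betaH w R (n + 1) m ω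
      = (1 - wnorm w (n + 1)) * betaH w R n m ω + wnorm w (n + 1) * ind (n + 1) ω := by
    intro n hn ω
    have hS : Sw w (n + 1) = Sw w n + w (n + 1) := Finset.sum_Icc_succ_top (Nat.le_add_left 1 n) _
    have h1 : Sw w n ≠ 0 := ne_of_gt (hSwpos n hn)
    have h2 : Sw w n + w (n + 1) ≠ 0 := by
      have := hw (n + 1); have := hSwpos n hn; positivity
    unfold betaH wnorm
    rw [Finset.sum_Icc_succ_top (Nat.le_add_left 1 n), hS]
    show _ = _ * (_ / _) + _ / _ * ind (n+1) ω
    simp only [hinddef]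
    by_cases hR : R (n + 1) ω = m
    · simp only [hR, if_true, eq_self_iff_true]
      field_simp
      ring
    · simp only [hR, if_false]
      field_simp
      ring
  -- measurability
  have hHle : ∀ n, Hsig R n ≤ (by infer_instance : MeasurableSpace Ω) := by
    intro n
    unfold Hsig
    refine iSup_le fun j => iSup_le fun _ => ?_
    intro s hs
    obtain ⟨t, -, rfl⟩ := hs
    exact hRmeas j (by trivial)
  have hRm' : ∀ n j, 1 ≤ j → j ≤ n → Measurable[Hsig R n] (R j) := by
    intro n j h1 h2
    rw [measurable_iff_comap_le]
    calc MeasurableSpace.comap (R j) inferInstance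
        ≤ MeasurableSpace.comap (R j) ⊤ := MeasurableSpace.comap_mono le_top
      _ ≤ Hsig R n := by
          unfold Hsig
          exact le_iSup_of_le j (le_iSup_of_le (Finset.mem_Icc.mpr ⟨h1, h2⟩) le_rfl)
  have hindm' : ∀ n j, 1 ≤ j → j ≤ n → Measurable[Hsig R n] (ind j) := by
    intro n j h1 h2
    have : ind j = (fun x : ℕ => if x = m then (1 : ℝ) else 0) ∘ R j := by
      funext ω; simp [hinddef, Function.comp]
    rw [this]
    exact (measurable_from_top).comp (hRm' n j h1 h2)
  have hβm : ∀ n j, 1 ≤ j → j ≤ n → Measurable[Hsig R n] (betaH w R j m) := by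
    intro n j h1 h2
    unfold betaH
    apply Measurable.div_const
    apply Finset.measurable_sum
    intro l hl
    obtain ⟨hl1, hl2⟩ := Finset.mem_Icc.mp hl
    exact (hindm' n l hl1 (le_trans hl2 h2)).const_mul (w l)
    -- processes
  set S : ℕ → Ω → ℝ := fun n ω => (betaH w R n m ω - α m) / varphi (wnorm w) γ η (n - 1)
    with hSdef
  set T : ℕ → Ω → ℝ := fun n ω => S n ω - S ik ω with hTdef
  set c : ℕ → Ω → ℝ := fun n ω =>
    γ n * ((1 - η n) * betaH w R n m ω + η n * α m) + (1 - γ n) * α m with hcdef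
  set r : ℕ → ℝ := fun j => wnorm w j / varphi (wnorm w) γ η (j - 1) with hrdef
  have hSb : ∀ n, 1 ≤ n → ∀ ω, |S n ω| ≤ 1 / varphi (wnorm w) γ η (n - 1) := by
    intro n hn ω
    obtain ⟨hb0, hb1⟩ := hβ01 n hn ω
    have habs : |betaH w R n m ω - α m| ≤ 1 := abs_le.mpr ⟨by linarith, by linarith⟩
    simp only [hSdef]
    rw [abs_div, abs_of_pos (hφpos (n - 1))]
    gcongr
    exact (hφpos (n - 1)).le
  have hTb : ∀ n, ik ≤ n → ∀ ω,
      |T n ω| ≤ 1 / varphi (wnorm w) γ η (n - 1) + 1 / varphi (wnorm w) γ η (ik - 1) := by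
    intro n hn ω
    simp only [hTdef]
    calc |S n ω - S ik ω| ≤ |S n ω| + |S ik ω| := abs_sub _ _
      _ ≤ _ := add_le_add (hSb n (le_trans hik1 hn) ω) (hSb ik hik1 ω)
  have hc01 : ∀ n, 1 ≤ n → ∀ ω, 0 ≤ c n ω ∧ c n ω ≤ 1 := by
    intro n hn ω
    obtain ⟨hb0, hb1⟩ := hβ01 n hn ω
    obtain ⟨hγ0, hγ1⟩ := hγ n; obtain ⟨hη0, hη1⟩ := hη n
    simp only [hcdef]
    constructor
    · have A0 : 0 ≤ γ n * ((1 - η n) * betaH w R n m ω + η n * α m) :=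
        mul_nonneg hγ0 (add_nonneg (mul_nonneg (by linarith) hb0) (mul_nonneg hη0 hαm0))
      have B0 : 0 ≤ (1 - γ n) * α m := mul_nonneg (by linarith) hαm0
      linarith
    · have A1 : (1 - η n) * betaH w R n m ω ≤ 1 - η n := by nlinarith
      have A2 : η n * α m ≤ η n := by nlinarith
      have A3 : γ n * ((1 - η n) * betaH w R n m ω + η n * α m) ≤ γ n * 1 :=
        mul_le_mul_of_nonneg_left (by linarith) hγ0
      have A4 : (1 - γ n) * α m ≤ 1 - γ n := by nlinarith
      linarith
  have hcm : ∀ n, 1 ≤ n → Measurable[Hsig R n] (c n) := by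
    intro n hn
    simp only [hcdef]
    exact ((((hβm n n hn le_rfl).const_mul (1 - η n)).add_const
      (η n * α m)).const_mul (γ n)).add_const ((1 - γ n) * α m)
  have hcond : ∀ n, ik ≤ n → μ[ind (n + 1) | Hsig R n] =ᵐ[μ] c n := by
    intro n hn
    have h1 : 1 ≤ n := le_trans hik1 hn
    have h2 : n + 1 ∉ I := fun hmem => by have := hikmax _ hmem; omega
    exact hmodel n h1 h2 m hm
  have hstep : ∀ n, ik ≤ n → ∀ ω,
      T (n + 1) ω = T n ω + r (n + 1) * (ind (n + 1) ω - c n ω) := by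
    intro n hn ω
    obtain ⟨k, rfl⟩ : ∃ k, n = k + 1 := ⟨n - 1, by omega⟩
    have hb := hβrec (k + 1) (by omega) ω
    have hp := hφsucc k
    have ha : 0 < 1 - wnorm w (k + 2) * (1 - γ (k + 1) + η (k + 1) * γ (k + 1)) :=
      (hfac (k + 1) (by omega)).1
    simp only [hTdef, hSdef, hrdef, hcdef]
    have e1 : (k + 1 + 1 : ℕ) - 1 = k + 1 := rfl
    have e2 : (k + 1 : ℕ) - 1 = k := rfl
    rw [e1, e2, hb, hp]
    have h1 : varphi (wnorm w) γ η k ≠ 0 := ne_of_gt (hφpos k)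
    have h2 : 1 - wnorm w (k + 2) * (1 - γ (k + 1) + η (k + 1) * γ (k + 1)) ≠ 0 := ne_of_gt ha
    have h2' : 1 - wnorm w (k + 1 + 1) * (1 - γ (k + 1) + γ (k + 1) * η (k + 1)) ≠ 0 := by rw [mul_comm (γ (k+1))]; exact h2
    field_simp
    ring
  have hTm : ∀ n, ik ≤ n → Measurable[Hsig R n] (T n) := by
    intro n hn
    have h1 : 1 ≤ n := le_trans hik1 hn
    simp only [hTdef, hSdef]
    exact (((hβm n n h1 le_rfl).sub_const (α m)).div_const _).sub
      (((hβm n ik hik1 hn).sub_const (α m)).div_const _)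
  -- the mgf bound
  have hmgf : ∀ l : ℝ, ∀ n, ik ≤ n →
      ∫ ω, Real.exp (l * T n ω) ∂μ
        ≤ Real.exp (l ^ 2 / 8 * ∑ j ∈ Finset.Icc (ik + 1) n, (r j) ^ 2) := by
    intro l n hn
    induction n, hn using Nat.le_induction with
    | base =>
        have hT0 : ∀ ω, T ik ω = 0 := fun ω => by simp [hTdef]
        have hIcc : Finset.Icc (ik + 1) ik = ∅ := Finset.Icc_eq_empty (by omega)
        simp [hT0, hIcc]
    | succ n hn IH =>
        have h1 : 1 ≤ n := le_trans hik1 hn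
        have hfm' : Measurable[Hsig R n] (fun ω => Real.exp (l * T n ω)) :=
          Real.measurable_exp.comp ((hTm n hn).const_mul l)
        set B : ℝ := Real.exp (|l| * (1 / varphi (wnorm w) γ η (n - 1)
          + 1 / varphi (wnorm w) γ η (ik - 1))) with hBdef
        have hfB : ∀ ω, Real.exp (l * T n ω) ≤ B := by
          intro ω
          rw [hBdef]
          apply Real.exp_le_exp.mpr
          calc l * T n ω ≤ |l * T n ω| := le_abs_self _
            _ = |l| * |T n ω| := abs_mul _ _
            _ ≤ |l| * (1 / varphi (wnorm w) γ η (n - 1) + 1 / varphi (wnorm w) γ η (ik - 1)) :=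
                mul_le_mul_of_nonneg_left (hTb n hn ω) (abs_nonneg l)
        have hXm : Measurable (ind (n + 1)) :=
          (hindm' (n + 1) (n + 1) (by omega) le_rfl).mono (hHle (n + 1)) le_rfl
        have key := step_mgf μ (hHle n) (fun ω => Real.exp (l * T n ω)) (ind (n + 1)) (c n) B
          hfm' (fun ω => (Real.exp_pos _).le) hfB (hind01 (n + 1)) hXm
          (hcm n h1) (fun ω => (hc01 n h1 ω).1) (fun ω => (hc01 n h1 ω).2)
          (hcond n hn) (l * r (n + 1))
        have heq : ∀ ω, Real.exp (l * T (n + 1) ω)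
            = Real.exp (l * T n ω) * Real.exp ((l * r (n + 1)) * (ind (n + 1) ω - c n ω)) := by
          intro ω
          rw [← Real.exp_add]
          congr 1
          rw [hstep n hn ω]
          ring
        have hLHS : ∫ ω, Real.exp (l * T (n + 1) ω) ∂μ
            = ∫ ω, Real.exp (l * T n ω)
                * Real.exp ((l * r (n + 1)) * (ind (n + 1) ω - c n ω)) ∂μ :=
          integral_congr_ae (Filter.Eventually.of_forall heq)
        rw [hLHS]
        calc ∫ ω, Real.exp (l * T n ω)
              * Real.exp ((l * r (n + 1)) * (ind (n + 1) ω - c n ω)) ∂μ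
            ≤ (∫ ω, Real.exp (l * T n ω) ∂μ) * Real.exp ((l * r (n + 1)) ^ 2 / 8) := key
          _ ≤ Real.exp (l ^ 2 / 8 * ∑ j ∈ Finset.Icc (ik + 1) n, (r j) ^ 2)
              * Real.exp ((l * r (n + 1)) ^ 2 / 8) :=
              mul_le_mul_of_nonneg_right IH (Real.exp_pos _).le
          _ = Real.exp (l ^ 2 / 8 * ∑ j ∈ Finset.Icc (ik + 1) (n + 1), (r j) ^ 2) := by
              rw [← Real.exp_add, Finset.sum_Icc_succ_top (by omega : ik + 1 ≤ n + 1)]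
              congr 1
              ring
  -- final assembly
  set Φi := varphi (wnorm w) γ η (i - 1) with hPhii
  set Φk := varphi (wnorm w) γ η (ik - 1) with hPhik
  have hΦipos : 0 < Φi := hφpos _
  have hΦkpos : 0 < Φk := hφpos _
  have hVeq : (∑ j ∈ Finset.Icc (ik + 1) i,
        (wnorm w j) ^ 2 / (varphi (wnorm w) γ η (j - 1)) ^ 2)
      = ∑ j ∈ Finset.Icc (ik + 1) i, (r j) ^ 2 :=
    Finset.sum_congr rfl fun j _ => by rw [hrdef]; rw [div_pow]
  set V := ∑ j ∈ Finset.Icc (ik + 1) i, (r j) ^ 2 with hVdef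
  have hV0 : 0 ≤ V := Finset.sum_nonneg fun j _ => sq_nonneg _
  have hrw : Φi / (ε * Φk) = Φi / Φk / ε := by rw [div_div, mul_comm]
  have htriv : phiTilde (wnorm w) γ η ik ε i = 0 →
      μ {ω | ε < |betaH w R i m ω - α m|}
        ≤ ENNReal.ofReal (2 * Real.exp (-(phiTilde (wnorm w) γ η ik ε i) * ε ^ 2)) := by
    intro hz
    rw [hz]
    simp only [neg_zero, zero_mul, Real.exp_zero, mul_one]
    calc μ {ω | ε < |betaH w R i m ω - α m|} ≤ 1 := prob_le_one
      _ ≤ ENNReal.ofReal 2 := by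
          rw [show (1 : ENNReal) = ENNReal.ofReal 1 by simp]
          exact ENNReal.ofReal_le_ofReal (by norm_num)
  rcases le_or_gt ε (Φi / Φk) with hρ | hρ
  · apply htriv
    unfold phiTilde
    rw [← hPhii, ← hPhik, hrw]
    have hq1 : 1 ≤ Φi / Φk / ε := (one_le_div hε).mpr hρ
    by_cases hqle : Φi / Φk / ε ≤ 1
    · rw [if_pos hqle]
      have hq : Φi / Φk / ε = 1 := le_antisymm hqle hq1
      rw [hq]
      norm_num
    · rw [if_neg hqle]
      exact zero_div _
  · rcases eq_or_lt_of_le hV0 with hVz | hVpos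
    · apply htriv
      unfold phiTilde
      rw [← hPhii, ← hPhik, hVeq, ← hVz, mul_zero, div_zero]
    · -- main case
      set t := ε - Φi / Φk with htdef
      have ht : 0 < t := by rw [htdef]; linarith
      set s := t / Φi with hsdef
      have hs : 0 < s := div_pos ht hΦipos
      set l := 4 * s / V with hldef
      have hl : 0 < l := by rw [hldef]; positivity
      have hVne : V ≠ 0 := ne_of_gt hVpos
      have hqcond : Φi / Φk / ε ≤ 1 := le_of_lt ((div_lt_one hε).mpr hρ)
      have hptval : phiTilde (wnorm w) γ η ik ε i * ε ^ 2 = 2 * s ^ 2 / V := by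
        unfold phiTilde
        rw [← hPhii, ← hPhik, hVeq, hrw, if_pos hqcond, hsdef, htdef]
        field_simp
      have hexpval : l ^ 2 / 8 * V - l * s = -(2 * s ^ 2 / V) := by
        rw [hldef]
        field_simp
        ring
      set Cb := 1 / Φi + 1 / Φk with hCbdef
      have htail : ∀ U : Ω → ℝ, Measurable U → (∀ ω, |U ω| ≤ Cb) →
          (∫ ω, Real.exp (l * U ω) ∂μ ≤ Real.exp (l ^ 2 / 8 * V)) →
          μ {ω | s ≤ U ω} ≤ ENNReal.ofReal (Real.exp (-(2 * s ^ 2 / V))) := by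
        intro U hUm hUb hUint
        have hint : Integrable (fun ω => Real.exp (l * U ω)) μ := by
          refine integrable_of_bdd (Real.measurable_exp.comp (hUm.const_mul l))
            (C := Real.exp (|l| * Cb)) fun ω => ?_
          rw [Real.abs_exp]
          apply Real.exp_le_exp.mpr
          calc l * U ω ≤ |l * U ω| := le_abs_self _
            _ = |l| * |U ω| := abs_mul _ _
            _ ≤ |l| * Cb := mul_le_mul_of_nonneg_left (hUb ω) (abs_nonneg l)
        have hsub2 : {ω | s ≤ U ω} ⊆ {ω | Real.exp (l * s) ≤ Real.exp (l * U ω)} := by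
          intro ω hω
          exact Real.exp_le_exp.mpr (mul_le_mul_of_nonneg_left hω hl.le)
        have hmar := mul_meas_ge_le_integral_of_nonneg (μ := μ)
          (Filter.Eventually.of_forall fun ω => (Real.exp_pos (l * U ω)).le) hint
          (Real.exp (l * s))
        have h2 : (μ {x | Real.exp (l * s) ≤ Real.exp (l * U x)}).toReal
            ≤ Real.exp (l ^ 2 / 8 * V - l * s) := by
          rw [Real.exp_sub, le_div_iff₀ (Real.exp_pos _)]
          calc (μ {x | Real.exp (l * s) ≤ Real.exp (l * U x)}).toReal * Real.exp (l * s)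
              = Real.exp (l * s) * (μ {x | Real.exp (l * s) ≤ Real.exp (l * U x)}).toReal :=
                mul_comm _ _
            _ ≤ ∫ ω, Real.exp (l * U ω) ∂μ := hmar
            _ ≤ Real.exp (l ^ 2 / 8 * V) := hUint
        calc μ {ω | s ≤ U ω}
            ≤ μ {x | Real.exp (l * s) ≤ Real.exp (l * U x)} := measure_mono hsub2
          _ = ENNReal.ofReal ((μ {x | Real.exp (l * s) ≤ Real.exp (l * U x)}).toReal) :=
              (ENNReal.ofReal_toReal (measure_ne_top μ _)).symm
          _ ≤ ENNReal.ofReal (Real.exp (l ^ 2 / 8 * V - l * s)) := ENNReal.ofReal_le_ofReal h2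
          _ = ENNReal.ofReal (Real.exp (-(2 * s ^ 2 / V))) := by rw [hexpval]
      have hTmeas : Measurable (T i) := (hTm i hi.le).mono (hHle i) le_rfl
      have hTbd : ∀ ω, |T i ω| ≤ Cb := by
        intro ω
        rw [hCbdef, hPhii, hPhik]
        exact hTb i hi.le ω
      have htail1 : μ {ω | s ≤ T i ω} ≤ ENNReal.ofReal (Real.exp (-(2 * s ^ 2 / V))) :=
        htail (T i) hTmeas hTbd (hmgf l i hi.le)
      have htail2 : μ {ω | s ≤ -(T i ω)} ≤ ENNReal.ofReal (Real.exp (-(2 * s ^ 2 / V))) := by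
        apply htail (fun ω => -(T i ω)) hTmeas.neg (fun ω => by rw [abs_neg]; exact hTbd ω)
        have heq2 : ∀ ω, Real.exp (l * -(T i ω)) = Real.exp ((-l) * T i ω) := by
          intro ω; congr 1; ring
        calc ∫ ω, Real.exp (l * -(T i ω)) ∂μ = ∫ ω, Real.exp ((-l) * T i ω) ∂μ :=
              integral_congr_ae (Filter.Eventually.of_forall heq2)
          _ ≤ Real.exp ((-l) ^ 2 / 8 * V) := hmgf (-l) i hi.le
          _ = Real.exp (l ^ 2 / 8 * V) := by rw [neg_sq]
      have hsub : {ω | ε < |betaH w R i m ω - α m|}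
          ⊆ {ω | s ≤ T i ω} ∪ {ω | s ≤ -(T i ω)} := by
        intro ω hω
        simp only [Set.mem_setOf_eq, Set.mem_union] at hω ⊢
        have hβT : betaH w R i m ω - α m = Φi * T i ω + Φi * S ik ω := by
          simp only [hTdef, hSdef, ← hPhii, ← hPhik]
          field_simp
          ring
        have hSik : |S ik ω| ≤ 1 / Φk := by
          have := hSb ik hik1 ω
          rwa [← hPhik] at this
        have h2 : |betaH w R i m ω - α m| ≤ Φi * |T i ω| + Φi / Φk := by
          rw [hβT]
          calc |Φi * T i ω + Φi * S ik ω| ≤ |Φi * T i ω| + |Φi * S ik ω| := abs_add_le _ _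
            _ = Φi * |T i ω| + Φi * |S ik ω| := by
                rw [abs_mul, abs_mul, abs_of_pos hΦipos]
            _ ≤ Φi * |T i ω| + Φi * (1 / Φk) :=
                add_le_add_right (mul_le_mul_of_nonneg_left hSik hΦipos.le) _
            _ = Φi * |T i ω| + Φi / Φk := by rw [mul_one_div]
        have h3 : s < |T i ω| := by
          have h4 : t < Φi * |T i ω| := by rw [htdef]; linarith
          rw [hsdef, div_lt_iff₀ hΦipos]
          linarith [mul_comm Φi (|T i ω|)]
        rcases le_or_gt (T i ω) 0 with hT | hT
        · right; rw [abs_of_nonpos hT] at h3; linarith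
        · left; rw [abs_of_pos hT] at h3; linarith
      have hexpo : -(phiTilde (wnorm w) γ η ik ε i) * ε ^ 2 = -(2 * s ^ 2 / V) := by
        rw [neg_mul, hptval]
      calc μ {ω | ε < |betaH w R i m ω - α m|}
          ≤ μ ({ω | s ≤ T i ω} ∪ {ω | s ≤ -(T i ω)}) := measure_mono hsub
        _ ≤ μ {ω | s ≤ T i ω} + μ {ω | s ≤ -(T i ω)} := measure_union_le _ _
        _ ≤ ENNReal.ofReal (Real.exp (-(2 * s ^ 2 / V)))
            + ENNReal.ofReal (Real.exp (-(2 * s ^ 2 / V))) := add_le_add htail1 htail2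
        _ = ENNReal.ofReal (Real.exp (-(2 * s ^ 2 / V)) + Real.exp (-(2 * s ^ 2 / V))) :=
            (ENNReal.ofReal_add (Real.exp_pos _).le (Real.exp_pos _).le).symm
        _ = ENNReal.ofReal (2 * Real.exp (-(phiTilde (wnorm w) γ η ik ε i) * ε ^ 2)) := by
            rw [hexpo]
            ring_nf
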